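/- The map Φ : G → M, sending a group operation G on ℕ to the kernel of the marking homomorphism x_i ↦ i, is a topological embedding (a homeomorphism onto its image). -/

import Mathlib

/-- `G : ℕ × ℕ → ℕ` is a group operation on `ℕ`. -/
def IsGroupOp (G : ℕ × ℕ → ℕ) : Prop :=
  (∀ a b c, G (G (a, b), c) = G (a, G (b, c))) ∧
  ∃ e, (∀ a, G (e, a) = a ∧ G (a, e) = a) ∧ ∀ a, ∃ b, G (a, b) = e ∧ G (b, a) = e

/-- A copy of `ℕ` used as the carrier of the group `(ℕ, G)` associated to a group
operation `G` (a type synonym, so that the group structure induced by `G` does not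
clash with the usual arithmetic structure of `ℕ`). -/
def NatCarrier : Type := ℕ

/-- The identification of `ℕ` with `NatCarrier`. -/
def NatCarrier.mk : ℕ → NatCarrier := id

/-- The group `(ℕ, G)` induced by a group operation `G` on `ℕ`. -/
noncomputable def groupOfOp (G : ℕ × ℕ → ℕ) (h : IsGroupOp G) : Group NatCarrier where
  mul a b := NatCarrier.mk (G (a, b))
  one := NatCarrier.mk h.2.choose
  inv a := NatCarrier.mk (h.2.choose_spec.2 a).choose
  mul_assoc a b c := h.1 a b c
  one_mul a := (h.2.choose_spec.1 a).1
  mul_one a := (h.2.choose_spec.1 a).2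
  inv_mul_cancel a := (h.2.choose_spec.2 a).choose_spec.2

/-- The space of group operations on `ℕ` (topology inherited from `ℕ^(ℕ×ℕ)`). -/
abbrev GroupOpSpace : Type := {G : ℕ × ℕ → ℕ // IsGroupOp G}

/-- The kernel of the marking homomorphism `F_∞ → (ℕ, G)`, `x_i ↦ i`. -/
noncomputable def markingKer (G : ℕ × ℕ → ℕ) (h : IsGroupOp G) : Subgroup (FreeGroup ℕ) := by
  letI := groupOfOp G h
  exact (FreeGroup.lift fun i => NatCarrier.mk i).ker

lemma markingKer_normal (G : ℕ × ℕ → ℕ) (h : IsGroupOp G) : (markingKer G h).Normal := by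
  letI := groupOfOp G h
  exact MonoidHom.normal_ker _

def charSet {α : Type*} (χ : α → Bool) : Set α := {x | χ x = true}

/-- `χ` codes a normal subgroup. -/
def IsNormalSubgroupChar {α : Type*} [Group α] (χ : α → Bool) : Prop :=
  ∃ H : Subgroup α, H.Normal ∧ (H : Set α) = charSet χ

/-- The space of marked groups: normal subgroups of `F_∞` as a subspace of `2^{F_∞}`. -/
abbrev MarkedSpace : Type := {χ : FreeGroup ℕ → Bool // IsNormalSubgroupChar χ}

/-- `F_∞ ⧸ H` is isomorphic to the group `(ℕ, G)`. -/
def QuotIsoOp (H : Subgroup (FreeGroup ℕ)) (hn : H.Normal)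
    (G : ℕ × ℕ → ℕ) (hG : IsGroupOp G) : Prop := by
  haveI := hn
  letI := groupOfOp G hG
  exact Nonempty ((FreeGroup ℕ ⧸ H) ≃* NatCarrier)

open scoped Classical in
/-- `Φ : G → M` as a map into `2^{F_∞}`-coded normal subgroups. -/
noncomputable def PhiChar (G : GroupOpSpace) : MarkedSpace :=
  ⟨fun w => decide (w ∈ markingKer G.1 G.2),
    ⟨markingKer G.1 G.2, markingKer_normal G.1 G.2, by
      ext w; simp [charSet]⟩⟩

/-! ### Auxiliary material for the embedding proof -/

open Topology Filter

/-- The word `x_a x_b x_c⁻¹`. -/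
def word3 (a b c : ℕ) : FreeGroup ℕ :=
  FreeGroup.of a * FreeGroup.of b * (FreeGroup.of c)⁻¹

/-- `Steps G l x y` means: evaluating the (not necessarily reduced) word `l` in the
group `(ℕ, G)` and applying it on the left to `y` yields `x`. -/
inductive Steps (G : ℕ × ℕ → ℕ) : List (ℕ × Bool) → ℕ → ℕ → Prop
  | nil (y : ℕ) : Steps G [] y y
  | pos {a : ℕ} {l : List (ℕ × Bool)} {x y z : ℕ} :
      Steps G l z y → G (a, z) = x → Steps G ((a, true) :: l) x y
  | neg {a : ℕ} {l : List (ℕ × Bool)} {x y z : ℕ} :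
      Steps G l z y → G (a, x) = z → Steps G ((a, false) :: l) x y

lemma steps_local {G : ℕ × ℕ → ℕ} {l : List (ℕ × Bool)} {x y : ℕ} (h : Steps G l x y) :
    ∃ S : Finset (ℕ × ℕ), ∀ G' : ℕ × ℕ → ℕ, (∀ p ∈ S, G' p = G p) → Steps G' l x y := by
  induction h with
  | nil y => exact ⟨∅, fun _ _ => .nil y⟩
  | @pos a l x y z h hx ih =>
      obtain ⟨S, hS⟩ := ih
      refine ⟨insert (a, z) S, fun G' hG' => ?_⟩
      exact .pos (hS G' fun p hp => hG' p (Finset.mem_insert_of_mem hp))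
        (by rw [hG' (a, z) (Finset.mem_insert_self _ _)]; exact hx)
  | @neg a l x y z h hz ih =>
      obtain ⟨S, hS⟩ := ih
      refine ⟨insert (a, x) S, fun G' hG' => ?_⟩
      exact .neg (hS G' fun p hp => hG' p (Finset.mem_insert_of_mem hp))
        (by rw [hG' (a, x) (Finset.mem_insert_self _ _)]; exact hz)

lemma steps_exists (G : ℕ × ℕ → ℕ) (hG : IsGroupOp G) (l : List (ℕ × Bool)) (y : ℕ) :
    ∃ x, Steps G l x y := by
  obtain ⟨hassoc, e, he, hinv⟩ := hG
  induction l with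
  | nil => exact ⟨y, .nil y⟩
  | cons p l ih =>
      obtain ⟨z, hz⟩ := ih
      obtain ⟨a, b⟩ := p
      cases b with
      | true => exact ⟨G (a, z), .pos hz rfl⟩
      | false =>
          obtain ⟨binv, hb1, hb2⟩ := hinv a
          refine ⟨G (binv, z), .neg hz ?_⟩
          rw [← hassoc, hb1, (he z).1]

lemma steps_unique {G : ℕ × ℕ → ℕ} (hG : IsGroupOp G) {l : List (ℕ × Bool)} {x x' y : ℕ}
    (h : Steps G l x y) (h' : Steps G l x' y) : x = x' := by
  obtain ⟨hassoc, e, he, hinv⟩ := hG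
  induction l generalizing x x' with
  | nil => cases h; cases h'; rfl
  | cons p l ih =>
      obtain ⟨a, b⟩ := p
      cases b with
      | true =>
          rcases h with _ | ⟨hz, hx⟩ | _
          rcases h' with _ | ⟨hz', hx'⟩ | _
          rw [← hx, ← hx', ih hz hz']
      | false =>
          rcases h with _ | _ | ⟨hz, hx⟩
          rcases h' with _ | _ | ⟨hz', hx'⟩
          have hzz : G (a, x) = G (a, x') := by rw [hx, hx', ih hz hz']
          obtain ⟨binv, hb1, hb2⟩ := hinv a
          have : G (binv, G (a, x)) = G (binv, G (a, x')) := by rw [hzz]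
          rwa [← hassoc, ← hassoc, hb2, (he x).1, (he x').1] at this

lemma steps_phi (G : ℕ × ℕ → ℕ) (hG : IsGroupOp G) {l : List (ℕ × Bool)} {x y : ℕ}
    (h : Steps G l x y) :
    (letI := groupOfOp G hG;
      FreeGroup.lift NatCarrier.mk (FreeGroup.mk l) * NatCarrier.mk y = NatCarrier.mk x) := by
  letI := groupOfOp G hG
  induction h with
  | nil y => simp [FreeGroup.lift_mk]
  | @pos a l x y z h hx ih =>
      have h1 : FreeGroup.lift NatCarrier.mk (FreeGroup.mk ((a, true) :: l)) =
          NatCarrier.mk a * FreeGroup.lift NatCarrier.mk (FreeGroup.mk l) := by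
        rw [FreeGroup.lift_mk, FreeGroup.lift_mk, List.map_cons, List.prod_cons]; rfl
      rw [h1, mul_assoc, ih]
      show NatCarrier.mk (G (a, z)) = NatCarrier.mk x
      rw [hx]
  | @neg a l x y z h hz ih =>
      have h1 : FreeGroup.lift NatCarrier.mk (FreeGroup.mk ((a, false) :: l)) =
          (NatCarrier.mk a)⁻¹ * FreeGroup.lift NatCarrier.mk (FreeGroup.mk l) := by
        rw [FreeGroup.lift_mk, FreeGroup.lift_mk, List.map_cons, List.prod_cons]; rfl
      rw [h1, mul_assoc, ih, inv_mul_eq_iff_eq_mul]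
      show NatCarrier.mk z = NatCarrier.mk (G (a, x))
      rw [hz]

lemma mem_markingKer_iff_steps (G : ℕ × ℕ → ℕ) (hG : IsGroupOp G) (w : FreeGroup ℕ) :
    w ∈ markingKer G hG ↔ Steps G w.toWord 0 0 := by
  letI := groupOfOp G hG
  have hker : w ∈ markingKer G hG ↔ FreeGroup.lift NatCarrier.mk w = 1 := Iff.rfl
  constructor
  · intro hw
    obtain ⟨x, hx⟩ := steps_exists G hG w.toWord 0
    have := steps_phi G hG hx
    rw [FreeGroup.mk_toWord, hker.1 hw, one_mul] at this
    have hx0 : x = 0 := (show NatCarrier.mk 0 = NatCarrier.mk x from this).symm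
    rwa [hx0] at hx
  · intro hs
    have := steps_phi G hG hs
    rw [FreeGroup.mk_toWord] at this
    exact hker.2 (mul_eq_right.1 this)

lemma word3_mem_iff (G : ℕ × ℕ → ℕ) (hG : IsGroupOp G) (a b c : ℕ) :
    word3 a b c ∈ markingKer G hG ↔ G (a, b) = c := by
  letI := groupOfOp G hG
  have hker : word3 a b c ∈ markingKer G hG ↔
      FreeGroup.lift NatCarrier.mk (word3 a b c) = 1 := Iff.rfl
  rw [hker]
  have : FreeGroup.lift NatCarrier.mk (word3 a b c) =
      NatCarrier.mk a * NatCarrier.mk b * (NatCarrier.mk c)⁻¹ := by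
    simp [word3]
  rw [this, mul_inv_eq_one]
  have hmul : NatCarrier.mk a * NatCarrier.mk b = NatCarrier.mk (G (a, b)) := rfl
  rw [hmul]
  exact ⟨fun h => h, fun h => h⟩

/-- Local constancy of the membership test in `G`. -/
lemma locConst (w : FreeGroup ℕ) (G : GroupOpSpace) :
    ∃ S : Finset (ℕ × ℕ), ∀ G' : GroupOpSpace, (∀ p ∈ S, G'.1 p = G.1 p) →
      (w ∈ markingKer G'.1 G'.2 ↔ w ∈ markingKer G.1 G.2) := by
  by_cases hw : w ∈ markingKer G.1 G.2
  · obtain ⟨S, hS⟩ := steps_local ((mem_markingKer_iff_steps G.1 G.2 w).1 hw)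
    refine ⟨S, fun G' hG' => iff_of_true ?_ hw⟩
    exact (mem_markingKer_iff_steps G'.1 G'.2 w).2 (hS G'.1 hG')
  · obtain ⟨x, hx⟩ := steps_exists G.1 G.2 w.toWord 0
    have hx0 : x ≠ 0 := by
      intro h
      exact hw ((mem_markingKer_iff_steps G.1 G.2 w).2 (h ▸ hx))
    obtain ⟨S, hS⟩ := steps_local hx
    refine ⟨S, fun G' hG' => iff_of_false ?_ hw⟩
    intro hw'
    exact hx0 (steps_unique G'.2 (hS G'.1 hG')
      ((mem_markingKer_iff_steps G'.1 G'.2 w).1 hw'))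

open scoped Classical in
lemma continuous_phiChar : Continuous PhiChar := by
  apply Continuous.subtype_mk
  apply continuous_pi
  intro w
  apply IsLocallyConstant.continuous
  rw [IsLocallyConstant.iff_eventually_eq]
  intro G
  obtain ⟨S, hS⟩ := locConst w G
  have hopen : IsOpen {G' : GroupOpSpace | ∀ p ∈ S, G'.1 p = G.1 p} := by
    have heq : {G' : GroupOpSpace | ∀ p ∈ S, G'.1 p = G.1 p} =
        ⋂ p ∈ S, {G' : GroupOpSpace | G'.1 p = G.1 p} := by
      ext G'; simp
    rw [heq]
    refine isOpen_biInter_finset fun p _ => ?_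
    have hc : Continuous fun G' : GroupOpSpace => G'.1 p :=
      (continuous_apply p).comp continuous_subtype_val
    have ho : IsOpen {n : ℕ | n = G.1 p} := isOpen_discrete _
    exact ho.preimage hc
  have hmem : {G' : GroupOpSpace | ∀ p ∈ S, G'.1 p = G.1 p} ∈ 𝓝 G :=
    hopen.mem_nhds (fun p _ => rfl)
  filter_upwards [hmem] with G' hG'
  simp only [decide_eq_decide]
  exact hS G' hG'

open scoped Classical in
lemma phiChar_apply (G : GroupOpSpace) (w : FreeGroup ℕ) :
    (PhiChar G).1 w = true ↔ w ∈ markingKer G.1 G.2 := by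
  simp [PhiChar]

theorem stmt_13' : Topology.IsEmbedding PhiChar := by
  have hinj : Function.Injective PhiChar := by
    intro G G' h
    refine Subtype.ext (funext fun p => ?_)
    have h1 : word3 p.1 p.2 (G.1 p) ∈ markingKer G.1 G.2 :=
      (word3_mem_iff G.1 G.2 p.1 p.2 (G.1 p)).2 rfl
    have hw : (PhiChar G).1 (word3 p.1 p.2 (G.1 p)) = (PhiChar G').1 (word3 p.1 p.2 (G.1 p)) := by
      rw [h]
    have h2 : word3 p.1 p.2 (G.1 p) ∈ markingKer G'.1 G'.2 :=
      (phiChar_apply G' _).1 (hw ▸ (phiChar_apply G _).2 h1)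
    have h3 := (word3_mem_iff G'.1 G'.2 p.1 p.2 (G.1 p)).1 h2
    rw [Prod.mk.eta] at h3
    exact h3.symm
  have hind : Topology.IsInducing PhiChar := by
    rw [Topology.isInducing_iff_nhds]
    intro G
    refine le_antisymm (continuous_phiChar.tendsto G).le_comap ?_
    intro U hU
    rw [nhds_induced] at hU
    obtain ⟨V, hV, hVU⟩ := hU
    rw [nhds_pi, Filter.mem_pi] at hV
    obtain ⟨I, hIfin, t, ht, hsub⟩ := hV
    refine Filter.mem_comap.2 ⟨⋂ p ∈ I, {χ : MarkedSpace | χ.1 (word3 p.1 p.2 (G.1 p)) = true},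
      ?_, ?_⟩
    · refine (hIfin.isOpen_biInter fun p _ => ?_).mem_nhds ?_
      · have hc : Continuous fun χ : MarkedSpace => χ.1 (word3 p.1 p.2 (G.1 p)) :=
          (continuous_apply (word3 p.1 p.2 (G.1 p))).comp continuous_subtype_val
        have ho : IsOpen {b : Bool | b = true} := isOpen_discrete _
        exact ho.preimage hc
      · refine Set.mem_iInter₂.2 fun p _ => ?_
        exact (phiChar_apply G _).2 ((word3_mem_iff G.1 G.2 p.1 p.2 (G.1 p)).2 rfl)
    · intro G' hG'
      apply hVU
      apply hsub
      intro p hp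
      have h1 := Set.mem_iInter₂.1 hG' p hp
      have h2 : word3 p.1 p.2 (G.1 p) ∈ markingKer G'.1 G'.2 := (phiChar_apply G' _).1 h1
      have h3 : G'.1 (p.1, p.2) = G.1 p := (word3_mem_iff G'.1 G'.2 p.1 p.2 (G.1 p)).1 h2
      have h4 : G'.1 p = G.1 p := by rwa [Prod.mk.eta] at h3
      show G'.1 p ∈ t p
      exact h4 ▸ mem_of_mem_nhds (ht p)
  exact ⟨hind, hinj⟩

/-- The map `Φ : G → M`, sending a group operation `G` on `ℕ` to the kernel of the
marking homomorphism `x_i ↦ i`, is a topological embedding. -/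
theorem stmt_13 : Topology.IsEmbedding PhiChar := by
  exact stmt_13'
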